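/- The following q-identity of fermionic type holds: ((-qt;q)_∞ (-t^{-1};q)_∞ (q;q)_∞²) / ((qt;q)_∞ (t^{-1};q)_∞ (-q;q)_∞²) = (t+1)/(t-1) + 2 Σ_{r=0}^∞ [ (-1)^r q^{r+1}t/(1 - q^{r+1}t) - (-1)^r q^{r+1}t^{-1}/(1 - q^{r+1}t^{-1}) ]. -/

import Mathlib

open Complex Finset Filter Metric

/-- The `q`-Pochhammer symbol `(a;q)_∞ = ∏_{r≥0} (1 - a q^r)`. -/
noncomputable def qpoch (a q : ℂ) : ℂ := ∏' r : ℕ, (1 - a * q ^ r)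




namespace Ferm

variable {q : ℂ}

lemma summable_norm_aq (hq : ‖q‖ < 1) (a : ℂ) :
    Summable (fun r : ℕ => ‖a‖ * ‖q‖ ^ r) :=
  (summable_geometric_of_lt_one (norm_nonneg q) hq).mul_left ‖a‖

lemma factor_ne_zero {b : ℂ} (hb : ‖b‖ ≤ 1/2) (r : ℕ) (hq : ‖q‖ < 1) :
    1 - b * q ^ r ≠ 0 := by
  intro h
  have h1 : (1 : ℂ) = b * q ^ r := by linear_combination h
  have : (1:ℝ) ≤ 1/2 := by
    calc (1:ℝ) = ‖(1:ℂ)‖ := by simp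
    _ = ‖b * q ^ r‖ := by rw [h1]
    _ = ‖b‖ * ‖q‖ ^ r := by rw [norm_mul, norm_pow]
    _ ≤ (1/2) * 1 := by
        apply mul_le_mul hb _ (by positivity) (by norm_num)
        exact pow_le_one₀ (norm_nonneg q) hq.le
    _ = 1/2 := by ring
  linarith

lemma norm_bq_le {b : ℂ} (hb : ‖b‖ ≤ 1/2) (hq : ‖q‖ < 1) (r : ℕ) :
    ‖b * q ^ r‖ ≤ (1/2) * ‖q‖ ^ r := by
  rw [norm_mul, norm_pow]
  exact mul_le_mul_of_nonneg_right hb (by positivity)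

lemma norm_bq_le_half {b : ℂ} (hb : ‖b‖ ≤ 1/2) (hq : ‖q‖ < 1) (r : ℕ) :
    ‖b * q ^ r‖ ≤ 1/2 := by
  refine (norm_bq_le hb hq r).trans ?_
  have := pow_le_one₀ (norm_nonneg q) hq.le (n := r)
  nlinarith

lemma summable_log_small {b : ℂ} (hb : ‖b‖ ≤ 1/2) (hq : ‖q‖ < 1) :
    Summable (fun r : ℕ => Complex.log (1 - b * q ^ r)) := by
  refine Summable.of_norm_bounded (g := fun r : ℕ => (3/2) * ((1/2) * ‖q‖ ^ r)) ?_ ?_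
  · exact ((summable_geometric_of_lt_one (norm_nonneg q) hq).mul_left _).mul_left _
  · intro r
    have h1 : ‖-(b * q ^ r)‖ ≤ 1/2 := by
      rw [norm_neg]; exact norm_bq_le_half hb hq r
    have h2 := Complex.norm_log_one_add_half_le_self h1
    rw [show (1 : ℂ) + -(b * q ^ r) = 1 - b * q ^ r by ring] at h2
    refine h2.trans ?_
    have := norm_bq_le hb hq r
    simp only [norm_neg]
    nlinarith [norm_nonneg (b * q ^ r)]

lemma qpoch_small_eq_exp (hq : ‖q‖ < 1) {b : ℂ} (hb : ‖b‖ ≤ 1/2) :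
    qpoch b q = Complex.exp (∑' r : ℕ, Complex.log (1 - b * q ^ r)) := by
  have := Complex.cexp_tsum_eq_tprod
    (f := fun (r : ℕ) => 1 - b * q ^ r)
    (fun r => factor_ne_zero hb r hq)
    (summable_log_small hb hq)
  exact this.symm

lemma qpoch_small_ne_zero (hq : ‖q‖ < 1) {b : ℂ} (hb : ‖b‖ ≤ 1/2) :
    qpoch b q ≠ 0 := by
  rw [qpoch_small_eq_exp hq hb]; exact Complex.exp_ne_zero _

lemma multipliable_small (hq : ‖q‖ < 1) {b : ℂ} (hb : ‖b‖ ≤ 1/2) :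
    Multipliable (fun r : ℕ => 1 - b * q ^ r) :=
  Complex.multipliable_of_summable_log (summable_log_small hb hq)

lemma exists_tail_N (hq : ‖q‖ < 1) (a : ℂ) : ∃ N : ℕ, ‖a * q ^ N‖ ≤ 1/2 := by
  have h := tendsto_pow_atTop_nhds_zero_of_lt_one (norm_nonneg q) hq
  have h2 : Tendsto (fun N : ℕ => ‖a‖ * ‖q‖ ^ N) atTop (nhds 0) := by
    simpa using h.const_mul ‖a‖
  have h3 := h2.eventually_le_const (show (0:ℝ) < 1/2 by norm_num)
  obtain ⟨N, hN⟩ := h3.exists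
  exact ⟨N, by rw [norm_mul, norm_pow]; exact hN⟩

lemma multipliable_qpoch (hq : ‖q‖ < 1) (a : ℂ) :
    Multipliable (fun r : ℕ => 1 - a * q ^ r) := by
  obtain ⟨N, hN⟩ := exists_tail_N hq a
  apply Multipliable.comp_nat_add (k := N)
  have := multipliable_small hq hN
  apply this.congr
  intro r
  rw [pow_add]
  ring

lemma qpoch_split (hq : ‖q‖ < 1) (a : ℂ) (N : ℕ) :
    qpoch a q = (∏ r ∈ range N, (1 - a * q ^ r)) * qpoch (a * q ^ N) q := by
  have hm : Multipliable (fun n : ℕ => 1 - a * q ^ (n + N)) := by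
    apply (multipliable_qpoch hq (a * q ^ N)).congr
    intro r; rw [pow_add]; ring
  have := Multipliable.prod_mul_tprod_nat_mul' (f := fun r : ℕ => 1 - a * q ^ r) (k := N) hm
  rw [qpoch, ← this, qpoch]
  congr 1
  apply tprod_congr
  intro r
  show (fun r => 1 - a * q ^ r) (r + N) = 1 - a * q ^ N * q ^ r
  simp only []
  rw [pow_add]; ring

lemma qpoch_peel (hq : ‖q‖ < 1) (a : ℂ) :
    qpoch a q = (1 - a) * qpoch (a * q) q := by
  have := qpoch_split hq a 1
  simpa using this

lemma qpoch_ne_zero (hq : ‖q‖ < 1) {a : ℂ} (h : ∀ r : ℕ, 1 - a * q ^ r ≠ 0) :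
    qpoch a q ≠ 0 := by
  obtain ⟨N, hN⟩ := exists_tail_N hq a
  rw [qpoch_split hq a N]
  apply mul_ne_zero
  · exact Finset.prod_ne_zero_iff.2 fun r _ => h r
  · exact qpoch_small_ne_zero hq hN

lemma qpoch_eq_zero (r₀ : ℕ) {a : ℂ} (h : 1 - a * q ^ r₀ = 0) : qpoch a q = 0 := by
  have : HasProd (fun r : ℕ => 1 - a * q ^ r) 0 := by
    rw [HasProd]
    apply Tendsto.congr' (f₁ := fun _ => (0:ℂ)) _ tendsto_const_nhds
    filter_upwards [eventually_ge_atTop {r₀}] with s hs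
    exact (Finset.prod_eq_zero (hs (Finset.mem_singleton_self r₀)) h).symm
  rw [qpoch]; exact this.tprod_eq

end Ferm



namespace Ferm
variable {q : ℂ}

-- placeholders from part1

lemma exists_N_of_radius (hq : ‖q‖ < 1) (R : ℝ) : ∃ N : ℕ, R * ‖q‖ ^ N ≤ 1/2 := by
  have h := tendsto_pow_atTop_nhds_zero_of_lt_one (norm_nonneg q) hq
  have h2 : Tendsto (fun N : ℕ => R * ‖q‖ ^ N) atTop (nhds 0) := by
    simpa using h.const_mul R
  exact (h2.eventually_le_const (show (0:ℝ) < 1/2 by norm_num)).exists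

lemma slit_of_small {w : ℂ} (hw : ‖w‖ ≤ 1/2) : 1 - w ∈ Complex.slitPlane := by
  rw [Complex.mem_slitPlane_iff]
  left
  have h1 : |w.re| ≤ ‖w‖ := Complex.abs_re_le_norm w
  simp only [Complex.sub_re, Complex.one_re]
  have := abs_le.1 h1
  linarith

lemma log_term_bound (hq : ‖q‖ < 1) {w : ℂ} (hw : ‖w‖ ≤ 1/2) :
    ‖Complex.log (1 - w)‖ ≤ (3/2) * ‖w‖ := by
  have h1 : ‖-w‖ ≤ 1/2 := by rwa [norm_neg]
  have h2 := Complex.norm_log_one_add_half_le_self h1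
  rw [show (1 : ℂ) + -w = 1 - w by ring] at h2
  simpa using h2

lemma differentiable_qpoch (hq : ‖q‖ < 1) : Differentiable ℂ (fun a : ℂ => qpoch a q) := by
  intro a₀
  set R : ℝ := ‖a₀‖ + 1 with hRdef
  obtain ⟨N, hN⟩ := exists_N_of_radius hq R
  have hball : ∀ a ∈ Metric.ball (0:ℂ) R, ‖a * q ^ N‖ ≤ 1/2 := by
    intro a ha
    rw [Metric.mem_ball, dist_zero_right] at ha
    rw [norm_mul, norm_pow]
    calc ‖a‖ * ‖q‖ ^ N ≤ R * ‖q‖ ^ N := by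
          apply mul_le_mul_of_nonneg_right ha.le (by positivity)
    _ ≤ 1/2 := hN
  have key : Set.EqOn (fun a : ℂ => qpoch a q)
      (fun a : ℂ => (∏ r ∈ range N, (1 - a * q ^ r)) *
        Complex.exp (∑' r : ℕ, Complex.log (1 - a * q ^ N * q ^ r)))
      (Metric.ball (0:ℂ) R) := by
    intro a ha
    simp only []
    rw [qpoch_split hq a N, qpoch_small_eq_exp hq (hball a ha)]
  have hdiff : DifferentiableOn ℂ
      (fun a : ℂ => (∏ r ∈ range N, (1 - a * q ^ r)) *
        Complex.exp (∑' r : ℕ, Complex.log (1 - a * q ^ N * q ^ r)))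
      (Metric.ball (0:ℂ) R) := by
    apply DifferentiableOn.mul
    · apply Differentiable.differentiableOn
      apply Differentiable.fun_finsetProd
      intro r _
      apply Differentiable.const_sub
      exact (differentiable_id.mul_const _)
    · apply DifferentiableOn.cexp
      apply differentiableOn_tsum_of_summable_norm
        (u := fun r : ℕ => (3/2) * ((1/2) * ‖q‖ ^ r))
      · exact ((summable_geometric_of_lt_one (norm_nonneg q) hq).mul_left _).mul_left _
      · intro r
        apply DifferentiableOn.clog
        · apply Differentiable.differentiableOn
          apply Differentiable.const_sub
          exact (differentiable_id.mul_const _).mul_const _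
        · intro a ha
          exact slit_of_small (norm_bq_le_half (hball a ha) hq r)
      · exact Metric.isOpen_ball
      · intro r a ha
        exact (log_term_bound hq (norm_bq_le_half (hball a ha) hq r)).trans
          (by have := norm_bq_le (hball a ha) hq r; nlinarith [norm_nonneg (a * q^N * q^r)])
  have : DifferentiableOn ℂ (fun a : ℂ => qpoch a q) (Metric.ball (0:ℂ) R) :=
    hdiff.congr key
  apply this.differentiableAt
  apply Metric.isOpen_ball.mem_nhds
  rw [Metric.mem_ball, dist_zero_right]
  simp [hRdef]

end Ferm


namespace Ferm
variable {q : ℂ}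

noncomputable def uterm (q s : ℂ) (r : ℕ) : ℂ := (-1:ℂ)^r * q^(r+1) * s / (1 - q^(r+1)*s)
noncomputable def usum (q s : ℂ) : ℂ := ∑' r : ℕ, uterm q s r


lemma one_sub_lower {w : ℂ} (hw : ‖w‖ ≤ 1/2) : 1/2 ≤ ‖1 - w‖ := by
  have := norm_sub_norm_le (1 : ℂ) w
  simp only [norm_one] at this
  linarith

lemma div_bound {w : ℂ} (hw : ‖w‖ ≤ 1/2) : ‖w / (1 - w)‖ ≤ 2 * ‖w‖ := by
  rw [norm_div]
  have h1 := one_sub_lower hw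
  have h0 : (0:ℝ) < ‖1 - w‖ := by linarith
  rw [div_le_iff₀ h0]
  nlinarith [norm_nonneg w]

lemma uterm_eq (s : ℂ) (r N : ℕ) :
    uterm q s (r + N) = (-1:ℂ)^(r+N) * ((s * q^(N+1)) * q^r) / (1 - (s * q^(N+1)) * q^r) := by
  rw [uterm]
  have h1 : q ^ (r + N + 1) * s = s * q^(N+1) * q^r := by ring
  rw [h1]
  ring_nf

lemma uterm_tail_bound (hq : ‖q‖ < 1) {s : ℂ} {N : ℕ} (hN : ‖s * q^(N+1)‖ ≤ 1/2) (r : ℕ) :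
    ‖uterm q s (r + N)‖ ≤ ‖q‖ ^ r := by
  rw [uterm_eq]
  set w := s * q^(N+1) * q^r with hw
  have hw2 : ‖w‖ ≤ (1/2) * ‖q‖^r := norm_bq_le hN hq r
  have hw3 : ‖w‖ ≤ 1/2 := norm_bq_le_half hN hq r
  have : (-1:ℂ)^(r+N) * w / (1 - w) = (-1:ℂ)^(r+N) * (w / (1-w)) := by ring
  rw [this, norm_mul]
  have h4 : ‖(-1:ℂ)^(r+N)‖ = 1 := by
    rw [norm_pow, norm_neg, norm_one, one_pow]
  rw [h4, one_mul]
  calc ‖w / (1-w)‖ ≤ 2 * ‖w‖ := div_bound hw3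
  _ ≤ 2 * ((1/2) * ‖q‖^r) := by linarith
  _ = ‖q‖^r := by ring

lemma summable_uterm (hq : ‖q‖ < 1) (s : ℂ) : Summable (uterm q s) := by
  obtain ⟨N, hN⟩ := exists_N_of_radius hq (‖s‖ * ‖q‖)
  have hN2 : ‖s * q^(N+1)‖ ≤ 1/2 := by
    rw [norm_mul, norm_pow, pow_succ']
    calc ‖s‖ * (‖q‖ * ‖q‖^N) = (‖s‖*‖q‖) * ‖q‖^N := by ring
    _ ≤ 1/2 := hN
  rw [← summable_nat_add_iff N]
  apply Summable.of_norm_bounded (summable_geometric_of_lt_one (norm_nonneg q) hq)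
  exact fun r => uterm_tail_bound hq hN2 r

lemma usum_peel (hq : ‖q‖ < 1) (s : ℂ) :
    usum q s = q * s / (1 - q * s) - usum q (q * s) := by
  rw [usum, (summable_uterm hq s).tsum_eq_zero_add]
  have h0 : uterm q s 0 = q * s / (1 - q * s) := by
    rw [uterm]; norm_num
  rw [h0]
  have h1 : ∀ n : ℕ, uterm q s (n + 1) = -uterm q (q*s) n := by
    intro n
    rw [uterm, uterm]
    have e1 : q ^ (n + 1 + 1) * s = q ^ (n+1) * (q * s) := by ring
    have e2 : (-1:ℂ)^(n+1) * q^(n+1+1) * s = -((-1:ℂ)^n * q^(n+1) * (q*s)) := by ring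
    rw [e1, e2, neg_div]
  have h2 : ∑' n : ℕ, uterm q s (n+1) = -usum q (q*s) := by
    rw [usum, ← tsum_neg]
    exact tsum_congr h1
  rw [h2]
  ring

end Ferm

namespace Ferm
variable {q : ℂ}

noncomputable def gsum (q s : ℂ) : ℂ :=
  ∑' r : ℕ, ((-1:ℂ)^r * q^(r+1) * s / (1 - q^(r+1)*s) - (-1:ℂ)^r * q^(r+1) * s⁻¹ / (1 - q^(r+1)*s⁻¹))

lemma gsum_eq (hq : ‖q‖ < 1) (s : ℂ) : gsum q s = usum q s - usum q s⁻¹ := by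
  rw [gsum, usum, usum]
  exact (summable_uterm hq s).tsum_sub (summable_uterm hq s⁻¹)

lemma differentiableAt_usum (hq : ‖q‖ < 1) {z₀ : ℂ} {ε : ℝ} (hε : 0 < ε)
    (h1 : ∀ s ∈ Metric.ball z₀ ε, ∀ r : ℕ, 1 - q^(r+1)*s ≠ 0) :
    DifferentiableAt ℂ (usum q) z₀ := by
  set R : ℝ := ‖z₀‖ + ε with hR
  obtain ⟨N, hN⟩ := exists_N_of_radius hq (R * ‖q‖)
  have hN' : R * ‖q‖^(N+1) ≤ 1/2 := by
    rw [pow_succ']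
    calc R * (‖q‖ * ‖q‖^N) = R * ‖q‖ * ‖q‖^N := by ring
    _ ≤ 1/2 := hN
  have hball : ∀ s ∈ Metric.ball z₀ ε, ‖s * q^(N+1)‖ ≤ 1/2 := by
    intro s hs
    rw [Metric.mem_ball] at hs
    have h2 : ‖s‖ ≤ R := by
      have := norm_sub_norm_le s z₀
      rw [← dist_eq_norm] at this
      rw [hR]; linarith [this.trans hs.le]
    rw [norm_mul, norm_pow]
    calc ‖s‖ * ‖q‖^(N+1) ≤ R * ‖q‖^(N+1) := by
          apply mul_le_mul_of_nonneg_right h2 (by positivity)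
    _ ≤ 1/2 := hN'
  have hfun : usum q = fun s => (∑ r ∈ range N, uterm q s r) + ∑' r : ℕ, uterm q s (r + N) := by
    funext s
    rw [usum, ← (summable_uterm hq s).sum_add_tsum_nat_add N]
  rw [hfun]
  have hd : DifferentiableOn ℂ
      (fun s => (∑ r ∈ range N, uterm q s r) + ∑' r : ℕ, uterm q s (r + N))
      (Metric.ball z₀ ε) := by
    apply DifferentiableOn.add
    · apply DifferentiableOn.fun_sum
      intro r _
      apply DifferentiableOn.div
      · exact (Differentiable.differentiableOn (by fun_prop))
      · exact (Differentiable.differentiableOn (by fun_prop))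
      · intro s hs; exact h1 s hs r
    · apply differentiableOn_tsum_of_summable_norm
        (u := fun r : ℕ => ‖q‖ ^ r)
      · exact summable_geometric_of_lt_one (norm_nonneg q) hq
      · intro r
        apply DifferentiableOn.div
        · exact (Differentiable.differentiableOn (by fun_prop))
        · exact (Differentiable.differentiableOn (by fun_prop))
        · intro s hs; exact h1 s hs (r + N)
      · exact Metric.isOpen_ball
      · intro r s hs
        exact uterm_tail_bound hq (hball s hs) r
  exact hd.differentiableAt (Metric.isOpen_ball.mem_nhds (Metric.mem_ball_self hε))

lemma differentiableAt_usum_inv (hq : ‖q‖ < 1) {z₀ : ℂ} (hz : z₀ ≠ 0) {ε : ℝ} (hε : 0 < ε)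
    (h2 : ∀ s ∈ Metric.ball z₀ ε, ∀ r : ℕ, 1 - q^(r+1)*s⁻¹ ≠ 0) :
    DifferentiableAt ℂ (fun s : ℂ => usum q s⁻¹) z₀ := by
  have hzi : z₀⁻¹ ≠ 0 := inv_ne_zero hz
  have hc : ContinuousAt (Inv.inv : ℂ → ℂ) z₀⁻¹ := continuousAt_inv₀ hzi
  have hmem : Metric.ball z₀ ε ∈ nhds (z₀⁻¹)⁻¹ := by
    rw [inv_inv]
    exact Metric.isOpen_ball.mem_nhds (Metric.mem_ball_self hε)
  have hpre : (Inv.inv : ℂ → ℂ) ⁻¹' (Metric.ball z₀ ε) ∈ nhds z₀⁻¹ := hc.preimage_mem_nhds hmem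
  have hopen : ({0}ᶜ : Set ℂ) ∈ nhds z₀⁻¹ := by
    apply IsOpen.mem_nhds isOpen_compl_singleton
    simpa using hzi
  obtain ⟨ε', hε', hsub⟩ := Metric.mem_nhds_iff.1 (Filter.inter_mem hpre hopen)
  have husum : DifferentiableAt ℂ (usum q) z₀⁻¹ := by
    apply differentiableAt_usum hq hε'
    intro w hw r
    obtain ⟨hw1, hw2⟩ := hsub hw
    have hw0 : w ≠ 0 := by simpa using hw2
    have := h2 w⁻¹ hw1 r
    rwa [inv_inv] at this
  exact DifferentiableAt.comp (g := usum q) (f := fun s : ℂ => s⁻¹) z₀ husum (differentiableAt_inv hz)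

lemma differentiableAt_gsum (hq : ‖q‖ < 1) {z₀ : ℂ} (hz : z₀ ≠ 0) {ε : ℝ} (hε : 0 < ε)
    (h1 : ∀ s ∈ Metric.ball z₀ ε, ∀ r : ℕ, 1 - q^(r+1)*s ≠ 0)
    (h2 : ∀ s ∈ Metric.ball z₀ ε, ∀ r : ℕ, 1 - q^(r+1)*s⁻¹ ≠ 0) :
    DifferentiableAt ℂ (gsum q) z₀ := by
  have hfun : gsum q = fun s : ℂ => usum q s - usum q s⁻¹ := by
    funext s; exact gsum_eq hq s
  rw [hfun]
  exact (differentiableAt_usum hq hε h1).sub (differentiableAt_usum_inv hq hz hε h2)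

end Ferm



namespace Ferm
variable {q : ℂ}

-- from earlier parts
/-- the set of regular points -/
def goodPt (q s : ℂ) : Prop := s ≠ 0 ∧ ∀ k : ℤ, s ≠ q ^ k

noncomputable def Phi (q t : ℂ) : ℂ :=
  (qpoch (-(q*t)) q * qpoch (-(q*t⁻¹)) q * (qpoch q q)^2) /
  (qpoch (q*t) q * qpoch (q*t⁻¹) q * (qpoch (-q) q)^2)

noncomputable def Kf (q : ℂ) : ℂ → ℂ :=
  fun t => (t+1) * dslope (Phi q) 1 t - 2 * gsum q t

lemma norm_lt_one_ne {a : ℂ} (h : ‖a‖ < 1) : (1:ℂ) - a ≠ 0 := by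
  intro h0
  have : a = 1 := by linear_combination -h0
  rw [this] at h; simp at h

lemma qpoch_q_ne_zero (hq : ‖q‖ < 1) : qpoch q q ≠ 0 := by
  apply qpoch_ne_zero hq
  intro r
  apply norm_lt_one_ne
  rw [norm_mul, norm_pow]
  calc ‖q‖ * ‖q‖^r ≤ ‖q‖ * 1 := by
        apply mul_le_mul_of_nonneg_left (pow_le_one₀ (norm_nonneg q) hq.le) (norm_nonneg q)
  _ < 1 := by rw [mul_one]; exact hq

lemma qpoch_negq_ne_zero (hq : ‖q‖ < 1) : qpoch (-q) q ≠ 0 := by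
  apply qpoch_ne_zero hq
  intro r
  apply norm_lt_one_ne
  rw [norm_mul, norm_neg, norm_pow]
  calc ‖q‖ * ‖q‖^r ≤ ‖q‖ * 1 := by
        apply mul_le_mul_of_nonneg_left (pow_le_one₀ (norm_nonneg q) hq.le) (norm_nonneg q)
  _ < 1 := by rw [mul_one]; exact hq

lemma goodPt.ne_zero {s : ℂ} (h : goodPt q s) : s ≠ 0 := h.1
lemma goodPt.ne_one {s : ℂ} (h : goodPt q s) : s ≠ 1 := by
  have := h.2 0; simpa using this

lemma goodPt.h1 (hq0 : q ≠ 0) {s : ℂ} (h : goodPt q s) (r : ℕ) : 1 - q^(r+1)*s ≠ 0 := by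
  intro h0
  have hs : s = (q^(r+1))⁻¹ := by
    field_simp at h0 ⊢
    linear_combination -h0
  apply h.2 (-(r+1) : ℤ)
  rw [hs, zpow_neg]
  norm_cast

lemma goodPt.h2 (hq0 : q ≠ 0) {s : ℂ} (h : goodPt q s) (r : ℕ) : 1 - q^(r+1)*s⁻¹ ≠ 0 := by
  intro h0
  have hs : s = q^(r+1) := by
    have hsne := h.ne_zero
    field_simp at h0
    linear_combination h0
  apply h.2 ((r+1) : ℤ)
  rw [hs]
  norm_cast

lemma goodPt.mul_q (hq0 : q ≠ 0) {s : ℂ} (h : goodPt q s) : goodPt q (q*s) := by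
  refine ⟨mul_ne_zero hq0 h.ne_zero, fun k hk => ?_⟩
  apply h.2 (k - 1)
  have : s = q^k / q := by
    field_simp at hk ⊢
    linear_combination hk
  rw [this, zpow_sub_one₀ hq0]
  field_simp

lemma goodPt.qs_sub_one (hq0 : q ≠ 0) {s : ℂ} (h : goodPt q s) : 1 - q*s ≠ 0 := by
  have := h.h1 hq0 0
  simpa using this

-- nonvanishing of Phi denominator pieces on good-type points
lemma qpoch_qt_ne_zero (hq : ‖q‖ < 1) (hq0 : q ≠ 0) {s : ℂ} (h : ∀ r : ℕ, 1 - q^(r+1)*s ≠ 0) :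
    qpoch (q*s) q ≠ 0 := by
  apply qpoch_ne_zero hq
  intro r
  have := h r
  rw [pow_succ'] at this
  intro h0
  apply this
  linear_combination h0

lemma qpoch_qtinv_ne_zero (hq : ‖q‖ < 1) (hq0 : q ≠ 0) {s : ℂ}
    (h : ∀ r : ℕ, 1 - q^(r+1)*s⁻¹ ≠ 0) : qpoch (q*s⁻¹) q ≠ 0 := by
  apply qpoch_ne_zero hq
  intro r
  have := h r
  rw [pow_succ'] at this
  intro h0
  apply this
  linear_combination h0

lemma Phi_one (hq : ‖q‖ < 1) : Phi q 1 = 1 := by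
  rw [Phi]
  simp only [inv_one, mul_one]
  rw [div_eq_one_iff_eq]
  · ring
  · exact mul_ne_zero (mul_ne_zero (qpoch_q_ne_zero hq) (qpoch_q_ne_zero hq))
      (pow_ne_zero 2 (qpoch_negq_ne_zero hq))

end Ferm

namespace Ferm
variable {q : ℂ}

noncomputable def Ffun (q t : ℂ) : ℂ := (t+1)/(t-1) * Phi q t
noncomputable def Gfun (q t : ℂ) : ℂ := (t+1)/(t-1) + 2 * gsum q t

lemma sub_one_ne {s : ℂ} (h : s ≠ 1) : s - 1 ≠ 0 := sub_ne_zero.2 h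
lemma one_sub_inv_ne {s : ℂ} (h0 : s ≠ 0) (h : s ≠ 1) : 1 - s⁻¹ ≠ 0 := by
  intro hh
  apply h
  field_simp at hh
  linear_combination hh

lemma K_eq (hq : ‖q‖ < 1) {s : ℂ} (hs1 : s ≠ 1) :
    Kf q s = Ffun q s - Gfun q s := by
  rw [Kf, Ffun, Gfun, dslope_of_ne (Phi q) hs1, slope_def_field, Phi_one hq]
  have h1 : s - 1 ≠ 0 := sub_one_ne hs1
  field_simp
  ring

lemma qpoch_arg_congr (a b : ℂ) (h : a = b) : qpoch a q = qpoch b q := by rw [h]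

lemma F_FE (hq : ‖q‖ < 1) (hq0 : q ≠ 0) {s : ℂ} (hs : goodPt q s) :
    Ffun q (q*s) = - Ffun q s := by
  have hs0 := hs.ne_zero
  have hs1 := hs.ne_one
  have hqs := hs.mul_q hq0
  have hqs1 : 1 - q*s ≠ 0 := hs.qs_sub_one hq0
  have e1 : q*(q*s)⁻¹ = s⁻¹ := by field_simp
  by_cases hc : 1 + q*s = 0
  · -- degenerate case: q*s = -1
    have hqs_eq : q*s = -1 := by linear_combination hc
    have hz1 : qpoch (-(q*s)) q = 0 := by
      rw [hqs_eq]
      apply qpoch_eq_zero 0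
      norm_num
    have hPhi : Phi q s = 0 := by
      rw [Phi, hz1]
      simp
    have hnum : ((q*s)+1)/((q*s)-1) = 0 := by rw [hqs_eq]; norm_num
    rw [Ffun, Ffun, hnum, hPhi]
    simp
  · -- main case
    have R1 : qpoch (-(q*s)) q = (1+q*s) * qpoch (-(q*(q*s))) q := by
      rw [qpoch_peel hq (-(q*s))]
      rw [qpoch_arg_congr (-(q*s)*q) (-(q*(q*s))) (by ring)]
      ring_nf
    have R2 : qpoch (q*s) q = (1 - q*s) * qpoch (q*(q*s)) q := by
      rw [qpoch_peel hq (q*s)]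
      rw [qpoch_arg_congr (q*s*q) (q*(q*s)) (by ring)]
    have R3 : qpoch (-s⁻¹) q = (1+s⁻¹) * qpoch (-(q*s⁻¹)) q := by
      rw [qpoch_peel hq (-s⁻¹)]
      rw [qpoch_arg_congr (-s⁻¹*q) (-(q*s⁻¹)) (by ring)]
      ring_nf
    have R4 : qpoch (s⁻¹) q = (1-s⁻¹) * qpoch (q*s⁻¹) q := by
      rw [qpoch_peel hq s⁻¹]
      rw [qpoch_arg_congr (s⁻¹*q) (q*s⁻¹) (by ring)]
    have ha2 : qpoch (q*(q*s)) q ≠ 0 := qpoch_qt_ne_zero hq hq0 (hqs.h1 hq0)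
    have hbi : qpoch (q*s⁻¹) q ≠ 0 := qpoch_qtinv_ne_zero hq hq0 (hs.h2 hq0)
    have hcne : qpoch (-q) q ≠ 0 := qpoch_negq_ne_zero hq
    have h1si : 1 - s⁻¹ ≠ 0 := one_sub_inv_ne hs0 hs1
    have hs1' : s - 1 ≠ 0 := sub_one_ne hs1
    have hqs1' : q*s - 1 ≠ 0 := by
      intro hh; apply hqs1; linear_combination -hh
    have main : ∀ A2 Bi C a2 bi c : ℂ, a2 ≠ 0 → bi ≠ 0 → c ≠ 0 →
        (q*s+1)/(q*s-1) * (A2 * ((1+s⁻¹)*Bi) * C^2 / (a2 * ((1-s⁻¹)*bi) * c^2)) =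
        -((s+1)/(s-1) * ((1+q*s)*A2 * Bi * C^2 / ((1-q*s)*a2 * bi * c^2))) := by
      intro A2 Bi C a2 bi c ha hb hc'
      have hD1 : (q*s-1) * (a2 * ((1-s⁻¹)*bi) * c^2) ≠ 0 :=
        mul_ne_zero hqs1' (mul_ne_zero (mul_ne_zero ha (mul_ne_zero h1si hb))
          (pow_ne_zero 2 hc'))
      have hD2 : (s-1) * ((1-q*s)*a2 * bi * c^2) ≠ 0 :=
        mul_ne_zero hs1' (mul_ne_zero (mul_ne_zero (mul_ne_zero hqs1 ha) hb)
          (pow_ne_zero 2 hc'))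
      rw [div_mul_div_comm, div_mul_div_comm, ← neg_div, div_eq_div_iff hD1 hD2]
      field_simp
      ring
    rw [Ffun, Ffun, Phi, Phi]
    rw [qpoch_arg_congr (-(q*(q*s)⁻¹)) (-s⁻¹) (by rw [e1]),
        qpoch_arg_congr (q*(q*s)⁻¹) (s⁻¹) e1, R1, R2, R3, R4]
    exact main _ _ _ _ _ _ ha2 hbi hcne
end Ferm

namespace Ferm
variable {q : ℂ}

lemma G_FE (hq : ‖q‖ < 1) (hq0 : q ≠ 0) {s : ℂ} (hs : goodPt q s) :
    Gfun q (q*s) = - Gfun q s := by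
  have hs0 := hs.ne_zero
  have hs1 := hs.ne_one
  have hqs1 : 1 - q*s ≠ 0 := hs.qs_sub_one hq0
  have hqs1' : q*s - 1 ≠ 0 := by intro hh; apply hqs1; linear_combination -hh
  have hs1' : s - 1 ≠ 0 := sub_one_ne hs1
  have h1si : 1 - s⁻¹ ≠ 0 := one_sub_inv_ne hs0 hs1
  have e1 : q*(q*s)⁻¹ = s⁻¹ := by field_simp
  have Ha : usum q (q*s) = q*s/(1-q*s) - usum q s := by
    linear_combination usum_peel hq s
  have Hb : usum q ((q*s)⁻¹) = s⁻¹/(1-s⁻¹) - usum q s⁻¹ := by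
    have h := usum_peel hq ((q*s)⁻¹)
    rw [e1] at h
    exact h
  rw [Gfun, Gfun, gsum_eq hq, gsum_eq hq, Ha, Hb]
  have key : (q*s+1)/(q*s-1) + 2*(q*s/(1-q*s)) - 2*(s⁻¹/(1-s⁻¹)) + ((s+1)/(s-1)) = 0 := by
    field_simp
    ring
  linear_combination key

lemma K_FE (hq : ‖q‖ < 1) (hq0 : q ≠ 0) {s : ℂ} (hs : goodPt q s) :
    Kf q (q*s) = - Kf q s := by
  rw [K_eq hq (hs.mul_q hq0).ne_one, K_eq hq hs.ne_one, F_FE hq hq0 hs, G_FE hq hq0 hs]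
  ring

lemma goodPt.pow_mul (hq0 : q ≠ 0) {s : ℂ} (hs : goodPt q s) (n : ℕ) : goodPt q (q^n * s) := by
  induction n with
  | zero => simpa using hs
  | succ n ih =>
      have : q^(n+1)*s = q*(q^n*s) := by ring
      rw [this]
      exact ih.mul_q hq0

lemma K_FE_chain (hq : ‖q‖ < 1) (hq0 : q ≠ 0) {s : ℂ} (hs : goodPt q s) (n : ℕ) :
    Kf q (q^n * s) = (-1:ℂ)^n * Kf q s := by
  induction n with
  | zero => simp
  | succ n ih =>
      have e : q^(n+1)*s = q*(q^n*s) := by ring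
      rw [e, K_FE hq hq0 (hs.pow_mul hq0 n), ih]
      ring

lemma gsum_neg_one : gsum q (-1) = 0 := by
  rw [gsum]
  have : ∀ r : ℕ, ((-1:ℂ)^r * q^(r+1) * (-1) / (1 - q^(r+1)*(-1)) -
      (-1:ℂ)^r * q^(r+1) * (-1:ℂ)⁻¹ / (1 - q^(r+1)*(-1:ℂ)⁻¹)) = 0 := by
    intro r
    norm_num
  rw [tsum_congr this]
  exact tsum_zero

lemma K_neg_one : Kf q (-1) = 0 := by
  rw [Kf, gsum_neg_one]
  ring_nf

end Ferm



namespace Ferm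
variable {q : ℂ}

-- previous parts (axioms for speed)

/-- the set where `Phi` and `K` live -/
def Vset (q : ℂ) : Set ℂ := {s : ℂ | s ≠ 0 ∧ ∀ k : ℤ, k ≠ 0 → s ≠ q ^ k}

lemma Vset_h1 (hq0 : q ≠ 0) {s : ℂ} (h : s ∈ Vset q) (r : ℕ) : 1 - q^(r+1)*s ≠ 0 := by
  intro h0
  have hs : s = (q^(r+1))⁻¹ := by
    field_simp at h0 ⊢
    linear_combination -h0
  apply h.2 (-(r+1) : ℤ) (by omega)
  rw [hs, zpow_neg]
  norm_cast

lemma Vset_h2 (hq0 : q ≠ 0) {s : ℂ} (h : s ∈ Vset q) (r : ℕ) : 1 - q^(r+1)*s⁻¹ ≠ 0 := by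
  intro h0
  have hs : s = q^(r+1) := by
    have := h.1
    field_simp at h0
    linear_combination h0
  apply h.2 ((r+1) : ℤ) (by omega)
  rw [hs]
  norm_cast

lemma differentiableOn_Phi (hq : ‖q‖ < 1) (hq0 : q ≠ 0) {U : Set ℂ}
    (hsub : U ⊆ Vset q) : DifferentiableOn ℂ (Phi q) U := by
  have hinv : DifferentiableOn ℂ (fun t : ℂ => t⁻¹) U := by
    intro t ht
    exact (differentiableAt_inv (hsub ht).1).differentiableWithinAt
  have hP := differentiable_qpoch hq
  apply DifferentiableOn.div
  · apply DifferentiableOn.mul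
    apply DifferentiableOn.mul
    · exact (hP.comp ((differentiable_id.const_mul q).neg)).differentiableOn
    · exact hP.comp_differentiableOn ((hinv.const_mul q).neg)
    · exact differentiableOn_const _
  · apply DifferentiableOn.mul
    apply DifferentiableOn.mul
    · exact (hP.comp (differentiable_id.const_mul q)).differentiableOn
    · exact hP.comp_differentiableOn (hinv.const_mul q)
    · exact differentiableOn_const _
  · intro t ht
    exact mul_ne_zero (mul_ne_zero (qpoch_qt_ne_zero hq hq0 (Vset_h1 hq0 (hsub ht)))
      (qpoch_qtinv_ne_zero hq hq0 (Vset_h2 hq0 (hsub ht))))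
      (pow_ne_zero 2 (qpoch_negq_ne_zero hq))

lemma differentiableAt_K (hq : ‖q‖ < 1) (hq0 : q ≠ 0) {z₀ : ℂ} {ε : ℝ} (hε : 0 < ε)
    (hsub : Metric.ball z₀ ε ⊆ Vset q) : DifferentiableAt ℂ (Kf q) z₀ := by
  have hz0 : z₀ ≠ 0 := (hsub (mem_ball_self hε)).1
  have hballnhds : Metric.ball z₀ ε ∈ nhds z₀ := Metric.isOpen_ball.mem_nhds (mem_ball_self hε)
  have hgs : DifferentiableAt ℂ (gsum q) z₀ :=
    differentiableAt_gsum hq hz0 hε (fun s hs r => Vset_h1 hq0 (hsub hs) r)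
      (fun s hs r => Vset_h2 hq0 (hsub hs) r)
  have hds : DifferentiableAt ℂ (dslope (Phi q) 1) z₀ := by
    by_cases hz1 : z₀ = 1
    · subst hz1
      have := (differentiableOn_dslope (f := Phi q) (c := (1:ℂ)) hballnhds).2
        (differentiableOn_Phi hq hq0 hsub)
      exact this.differentiableAt hballnhds
    · have heq : dslope (Phi q) 1 =ᶠ[nhds z₀] fun t => (Phi q t - Phi q 1)/(t - 1) := by
        filter_upwards [compl_singleton_mem_nhds hz1] with t ht
        rw [dslope_of_ne (Phi q) ht, slope_def_field]
      refine DifferentiableAt.congr_of_eventuallyEq ?_ heq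
      apply DifferentiableAt.div
      · exact (((differentiableOn_Phi hq hq0 hsub).differentiableAt hballnhds).sub
          (differentiableAt_const _))
      · exact differentiableAt_id.sub (differentiableAt_const _)
      · exact sub_ne_zero.2 hz1
  exact ((differentiableAt_id.add (differentiableAt_const 1)).mul hds).sub
    (hgs.const_mul 2)

end Ferm


namespace Ferm
variable {q : ℂ}

-- stand-ins

/-- the scaling exponent -/
noncomputable def mz (q z : ℂ) : ℤ := ⌊Real.log ‖z‖ / Real.log ‖q‖⌋

section mz

variable (hq : ‖q‖ < 1) (hq0 : q ≠ 0)
include hq hq0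

lemma logq_neg : Real.log ‖q‖ < 0 :=
  Real.log_neg (norm_pos_iff.2 hq0) hq

lemma mz_spec {z : ℂ} (hz : z ≠ 0) :
    ‖q‖^(mz q z + 1) < ‖z‖ ∧ ‖z‖ ≤ ‖q‖^(mz q z) := by
  have hb0 : (0:ℝ) < ‖q‖ := norm_pos_iff.2 hq0
  have hlb : Real.log ‖q‖ < 0 := logq_neg hq hq0
  have hz0 : (0:ℝ) < ‖z‖ := norm_pos_iff.2 hz
  set x : ℝ := Real.log ‖z‖ / Real.log ‖q‖ with hx
  have hx1 : ((mz q z : ℤ) : ℝ) ≤ x := Int.floor_le x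
  have hx2 : x < (mz q z : ℤ) + 1 := Int.lt_floor_add_one x
  have hlogz : Real.log ‖z‖ = x * Real.log ‖q‖ := by
    rw [hx, div_mul_cancel₀]
    exact ne_of_lt hlb
  constructor
  · rw [← Real.log_lt_log_iff (zpow_pos hb0 _) hz0, Real.log_zpow, hlogz]
    push_cast
    nlinarith
  · rw [← Real.log_le_log_iff hz0 (zpow_pos hb0 _), Real.log_zpow, hlogz]
    nlinarith

lemma mz_unique {z : ℂ} {m : ℤ} (h1 : ‖q‖^(m+1) < ‖z‖) (h2 : ‖z‖ ≤ ‖q‖^m) :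
    mz q z = m := by
  have hb0 : (0:ℝ) < ‖q‖ := norm_pos_iff.2 hq0
  have hz : z ≠ 0 := by
    intro h; rw [h, norm_zero] at h1
    exact absurd h1 (not_lt.2 (zpow_pos hb0 _).le)
  obtain ⟨h3, h4⟩ := mz_spec hq hq0 hz
  have hanti : StrictAnti (fun n : ℤ => ‖q‖ ^ n) := zpow_right_strictAnti₀ hb0 hq
  have e1 : mz q z < m + 1 := by
    have : ‖q‖^(m+1) < ‖q‖^(mz q z) := lt_of_lt_of_le h1 h4
    exact hanti.lt_iff_gt.1 this
  have e2 : m < mz q z + 1 := by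
    have : ‖q‖^(mz q z + 1) < ‖q‖^m := lt_of_lt_of_le h3 h2
    exact hanti.lt_iff_gt.1 this
  omega

lemma ball_subset_Vset {w₀ : ℂ} (h1 : ‖q‖ < ‖w₀‖) (h2 : ‖w₀‖ ≤ 1) :
    ∃ ε > 0, Metric.ball w₀ ε ⊆ Vset q := by
  have hb0 : (0:ℝ) < ‖q‖ := norm_pos_iff.2 hq0
  have hbinv : (1:ℝ) < ‖q‖⁻¹ := (one_lt_inv₀ hb0).2 hq
  refine ⟨min (‖w₀‖ - ‖q‖) (‖q‖⁻¹ - ‖w₀‖), by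
    apply lt_min_iff.2; constructor <;> [linarith; linarith], ?_⟩
  intro w hw
  rw [mem_ball, dist_eq_norm] at hw
  have hlow : ‖q‖ < ‖w‖ := by
    have := norm_sub_norm_le w₀ w
    rw [norm_sub_rev] at this
    have h3 : ‖w - w₀‖ < ‖w₀‖ - ‖q‖ := lt_of_lt_of_le hw (min_le_left _ _)
    linarith
  have hhigh : ‖w‖ < ‖q‖⁻¹ := by
    have := norm_sub_norm_le w w₀
    have h3 : ‖w - w₀‖ < ‖q‖⁻¹ - ‖w₀‖ := lt_of_lt_of_le hw (min_le_right _ _)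
    linarith
  constructor
  · intro h; rw [h, norm_zero] at hlow; linarith
  · intro k hk h
    have hanti : StrictAnti (fun n : ℤ => ‖q‖ ^ n) := zpow_right_strictAnti₀ hb0 hq
    rw [h, norm_zpow] at hlow hhigh
    have e1 : ‖q‖^(1:ℤ) = ‖q‖ := by norm_num
    have e2 : (‖q‖:ℝ)⁻¹ = ‖q‖^(-1:ℤ) := by norm_num
    have l1 : k < 1 := by
      apply hanti.lt_iff_gt.1
      rw [e1]; exact hlow
    have l2 : (-1:ℤ) < k := by
      apply hanti.lt_iff_gt.1
      rw [← e2]; exact hhigh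
    omega

end mz

/-- the global bounded extension -/
noncomputable def Hhat (q : ℂ) (z : ℂ) : ℂ := (-1:ℂ)^(mz q z) * Kf q (q^(-(mz q z)) * z)

end Ferm

namespace Ferm
variable {q : ℂ}

lemma neg_one_zpow_mul (m : ℤ) : ((-1:ℂ))^(m-1) * (-1) = (-1:ℂ)^m := by
  have h : ((-1:ℂ))^m = (-1:ℂ)^(m-1) * (-1:ℂ)^(1:ℤ) := by
    rw [← zpow_add₀ (by norm_num : (-1:ℂ) ≠ 0)]
    congr 1
    ring
  rw [h, zpow_one]

lemma Hhat_diffAt (hq : ‖q‖ < 1) (hq0 : q ≠ 0) {z₀ : ℂ} (hz₀ : z₀ ≠ 0) :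
    DifferentiableAt ℂ (Hhat q) z₀ := by
  have hb0 : (0:ℝ) < ‖q‖ := norm_pos_iff.2 hq0
  have hbne : (‖q‖:ℝ) ≠ 0 := ne_of_gt hb0
  have hanti : StrictAnti (fun n : ℤ => ‖q‖ ^ n) := zpow_right_strictAnti₀ hb0 hq
  obtain ⟨hs1, hs2⟩ := mz_spec hq hq0 hz₀
  set m₀ := mz q z₀ with hm₀
  set w₀ := q^(-m₀) * z₀ with hw₀
  have hnw₀ : ‖w₀‖ = ‖q‖^(-m₀) * ‖z₀‖ := by
    rw [hw₀, norm_mul, norm_zpow]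
  have hcanc : ∀ i j : ℤ, (‖q‖:ℝ)^(i:ℤ) * ‖q‖^(j:ℤ) = ‖q‖^(i+j) := by
    intro i j; rw [← zpow_add₀ hbne]
  have hw₀1 : ‖q‖ < ‖w₀‖ := by
    have h2 : (‖q‖:ℝ)^(-m₀) * ‖q‖^(m₀+1) = ‖q‖ := by
      rw [hcanc]; norm_num
    rw [hnw₀]
    calc ‖q‖ = ‖q‖^(-m₀) * ‖q‖^(m₀+1) := h2.symm
    _ < ‖q‖^(-m₀) * ‖z₀‖ := mul_lt_mul_of_pos_left hs1 (zpow_pos hb0 _)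
  have hw₀2 : ‖w₀‖ ≤ 1 := by
    have h2 : (‖q‖:ℝ)^(-m₀) * ‖q‖^(m₀) = 1 := by
      rw [hcanc]; norm_num
    rw [hnw₀]
    calc ‖q‖^(-m₀) * ‖z₀‖ ≤ ‖q‖^(-m₀) * ‖q‖^(m₀) :=
          mul_le_mul_of_nonneg_left hs2 (zpow_pos hb0 _).le
    _ = 1 := h2
  obtain ⟨ε₁, hε₁, hsubV⟩ := ball_subset_Vset hq hq0 hw₀1 hw₀2
  set δ : ℝ := min (ε₁ * ‖q‖^m₀) (min (‖z₀‖ - ‖q‖^(m₀+1)) (‖q‖^(m₀-1) - ‖q‖^m₀)) with hδdef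
  have hδ : 0 < δ := by
    apply lt_min (by positivity)
    apply lt_min (by linarith)
    have : (‖q‖:ℝ)^(m₀) < ‖q‖^(m₀-1) := hanti (by omega)
    linarith
  have key : Set.EqOn (Hhat q) (fun z => (-1:ℂ)^m₀ * Kf q (q^(-m₀) * z)) (ball z₀ δ) := by
    intro z hz
    rw [mem_ball, dist_eq_norm] at hz
    have hd1 : ‖z - z₀‖ < ‖z₀‖ - ‖q‖^(m₀+1) :=
      lt_of_lt_of_le hz ((min_le_right _ _).trans (min_le_left _ _))
    have hd2 : ‖z - z₀‖ < ‖q‖^(m₀-1) - ‖q‖^m₀ :=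
      lt_of_lt_of_le hz ((min_le_right _ _).trans (min_le_right _ _))
    have hd3 : ‖z - z₀‖ < ε₁ * ‖q‖^m₀ := lt_of_lt_of_le hz (min_le_left _ _)
    have htri1 := norm_sub_norm_le z₀ z
    rw [norm_sub_rev z₀ z] at htri1
    have htri2 := norm_sub_norm_le z z₀
    have hz1 : ‖q‖^(m₀+1) < ‖z‖ := by linarith
    have hz2 : ‖z‖ ≤ ‖q‖^(m₀-1) := by linarith
    have hzne : z ≠ 0 := by
      intro h; rw [h, norm_zero] at hz1
      exact absurd hz1 (not_lt.2 (zpow_pos hb0 _).le)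
    obtain ⟨hm1, hm2⟩ := mz_spec hq hq0 hzne
    have hmle : mz q z ≤ m₀ := by
      have : (‖q‖:ℝ)^(m₀+1) < ‖q‖^(mz q z) := lt_of_lt_of_le hz1 hm2
      have := hanti.lt_iff_gt.1 this
      omega
    have hmge : m₀ - 1 ≤ mz q z := by
      have : (‖q‖:ℝ)^(mz q z + 1) < ‖q‖^(m₀ - 1) := lt_of_lt_of_le hm1 hz2
      have := hanti.lt_iff_gt.1 this
      omega
    have hwball : q^(-m₀) * z ∈ ball w₀ ε₁ := by
      rw [mem_ball, dist_eq_norm, hw₀]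
      have e : q^(-m₀) * z - q^(-m₀) * z₀ = q^(-m₀) * (z - z₀) := by ring
      rw [e, norm_mul, norm_zpow]
      calc ‖q‖^(-m₀) * ‖z - z₀‖ < ‖q‖^(-m₀) * (ε₁ * ‖q‖^m₀) :=
            mul_lt_mul_of_pos_left hd3 (zpow_pos hb0 _)
      _ = ε₁ * (‖q‖^(-m₀) * ‖q‖^m₀) := by ring
      _ = ε₁ := by rw [hcanc]; norm_num
    rcases (by omega : mz q z = m₀ ∨ mz q z = m₀ - 1) with hcase | hcase
    · show Hhat q z = _
      rw [Hhat, hcase]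
    · -- use the functional equation once
      have hwV : q^(-m₀) * z ∈ Vset q := hsubV hwball
      have hwne1 : q^(-m₀) * z ≠ 1 := by
        intro h
        have hzq : z = q^m₀ := by
          have := congrArg (fun x => q^(m₀:ℤ) * x) h
          simp only [mul_one] at this
          rw [← mul_assoc, ← zpow_add₀ hq0] at this
          norm_num at this
          exact this
        have : mz q z = m₀ := by
          apply mz_unique hq hq0
          · rw [hzq, norm_zpow]; exact hanti (by omega)
          · rw [hzq, norm_zpow]
        omega
      have hgood : goodPt q (q^(-m₀) * z) := by
        refine ⟨hwV.1, fun k => ?_⟩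
        by_cases hk : k = 0
        · rw [hk, zpow_zero]; exact hwne1
        · exact hwV.2 k hk
      have hFE := K_FE hq hq0 hgood
      show Hhat q z = _
      rw [Hhat, hcase]
      have e : q^(-(m₀-1)) * z = q * (q^(-m₀) * z) := by
        rw [← mul_assoc]
        congr 1
        rw [← zpow_one_add₀ hq0]
        congr 1
        ring
      rw [e, hFE]
      simp only []
      rw [← neg_one_zpow_mul m₀]
      ring
  have hdiff : DifferentiableAt ℂ (fun z => (-1:ℂ)^m₀ * Kf q (q^(-m₀) * z)) z₀ := by
    apply DifferentiableAt.const_mul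
    have hK : DifferentiableAt ℂ (Kf q) (q^(-m₀) * z₀) := differentiableAt_K hq hq0 hε₁ hsubV
    exact DifferentiableAt.comp (g := Kf q) (f := fun z : ℂ => q^(-m₀) * z) z₀ hK
      (differentiableAt_id.const_mul _)
  apply hdiff.congr_of_eventuallyEq
  filter_upwards [Metric.isOpen_ball.mem_nhds (mem_ball_self hδ)] with z hz
  exact key hz

end Ferm

namespace Ferm
variable {q : ℂ}


lemma goodPt.zpow_mul (hq0 : q ≠ 0) {s : ℂ} (hs : goodPt q s) (j : ℤ) :
    goodPt q (q^j * s) := by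
  refine ⟨mul_ne_zero (zpow_ne_zero _ hq0) hs.1, fun k hk => ?_⟩
  apply hs.2 (k - j)
  have := congrArg (fun x => q^(-j) * x) hk
  simp only [← mul_assoc, ← zpow_add₀ hq0] at this
  rw [show -j + j = 0 by ring, zpow_zero, one_mul] at this
  rw [this]
  congr 1
  ring

lemma annulus_norm (hq : ‖q‖ < 1) (hq0 : q ≠ 0) {z : ℂ} (hz : z ≠ 0) :
    ‖q‖ < ‖q^(-(mz q z)) * z‖ ∧ ‖q^(-(mz q z)) * z‖ ≤ 1 := by
  have hb0 : (0:ℝ) < ‖q‖ := norm_pos_iff.2 hq0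
  have hbne : (‖q‖:ℝ) ≠ 0 := ne_of_gt hb0
  obtain ⟨hs1, hs2⟩ := mz_spec hq hq0 hz
  set m₀ := mz q z
  have hnw : ‖q^(-m₀) * z‖ = ‖q‖^(-m₀) * ‖z‖ := by rw [norm_mul, norm_zpow]
  constructor
  · rw [hnw]
    calc ‖q‖ = ‖q‖^(-m₀) * ‖q‖^(m₀+1) := by
          rw [← zpow_add₀ hbne]; norm_num
    _ < ‖q‖^(-m₀) * ‖z‖ := mul_lt_mul_of_pos_left hs1 (zpow_pos hb0 _)
  · rw [hnw]
    calc ‖q‖^(-m₀) * ‖z‖ ≤ ‖q‖^(-m₀) * ‖q‖^(m₀) :=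
          mul_le_mul_of_nonneg_left hs2 (zpow_pos hb0 _).le
    _ = 1 := by rw [← zpow_add₀ hbne]; norm_num

lemma Hhat_ann (hq : ‖q‖ < 1) (hq0 : q ≠ 0) {w : ℂ} (h1 : ‖q‖ < ‖w‖) (h2 : ‖w‖ ≤ 1) :
    Hhat q w = Kf q w := by
  have hmz : mz q w = 0 := by
    apply mz_unique hq hq0
    · norm_num; exact h1
    · norm_num; exact h2
  rw [Hhat, hmz]
  norm_num

lemma Hhat_eq_K (hq : ‖q‖ < 1) (hq0 : q ≠ 0) {s : ℂ} (hs : goodPt q s) :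
    Hhat q s = Kf q s := by
  have hs0 : s ≠ 0 := hs.1
  set m := mz q s with hm
  rw [Hhat, ← hm]
  rcases le_or_gt 0 m with hmn | hmn
  · set n := m.toNat with hn
    have hmn' : (n:ℤ) = m := Int.toNat_of_nonneg hmn
    have hw : goodPt q (q^(-m) * s) := hs.zpow_mul hq0 (-m)
    have hchain := K_FE_chain hq hq0 hw n
    have e : q^(n:ℕ) * (q^(-m) * s) = s := by
      rw [← mul_assoc, ← zpow_natCast q n, ← zpow_add₀ hq0, hmn']
      rw [show m + -m = 0 by ring, zpow_zero, one_mul]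
    rw [e] at hchain
    rw [hchain]
    have : ((-1:ℂ))^m = (-1:ℂ)^(n:ℕ) := by
      rw [← hmn', zpow_natCast]
    rw [this]
  · set n := (-m).toNat with hn
    have hmn' : (n:ℤ) = -m := Int.toNat_of_nonneg (by omega)
    have hchain := K_FE_chain hq hq0 hs n
    have e : q^(n:ℕ) * s = q^(-m) * s := by
      rw [← zpow_natCast q n, hmn']
    rw [← e, hchain, ← mul_assoc]
    have : ((-1:ℂ))^m * (-1:ℂ)^(n:ℕ) = 1 := by
      rw [← zpow_natCast (-1:ℂ) n, hmn', ← zpow_add₀ (by norm_num : (-1:ℂ) ≠ 0)]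
      rw [show m + -m = 0 by ring, zpow_zero]
    rw [this, one_mul]

lemma Hhat_bound (hq : ‖q‖ < 1) (hq0 : q ≠ 0) : ∃ M : ℝ, ∀ z : ℂ, z ≠ 0 → ‖Hhat q z‖ ≤ M := by
  have hb0 : (0:ℝ) < ‖q‖ := norm_pos_iff.2 hq0
  set A : Set ℂ := {w : ℂ | ‖q‖ ≤ ‖w‖ ∧ ‖w‖ ≤ 1} with hA
  have hAclosed : IsClosed A := by
    apply IsClosed.inter
    · exact isClosed_le continuous_const continuous_norm
    · exact isClosed_le continuous_norm continuous_const
  have hAcompact : IsCompact A := by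
    apply IsCompact.of_isClosed_subset (isCompact_closedBall (0:ℂ) 1) hAclosed
    intro w hw
    rw [mem_closedBall, dist_zero_right]
    exact hw.2
  have hAne : (1:ℂ) ∈ A := by
    constructor
    · simpa using hq.le
    · simp
  have hcont : ContinuousOn (fun w => ‖Hhat q w‖) A := by
    intro w hw
    have hw0 : w ≠ 0 := by
      intro h
      rw [h] at hw
      have := hw.1
      rw [norm_zero] at this
      linarith
    exact ((Hhat_diffAt hq hq0 hw0).continuousAt.norm).continuousWithinAt
  obtain ⟨x₀, hx₀A, hx₀max⟩ := hAcompact.exists_isMaxOn ⟨1, hAne⟩ hcont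
  refine ⟨‖Hhat q x₀‖, fun z hz => ?_⟩
  obtain ⟨h1, h2⟩ := annulus_norm hq hq0 (z := z) hz
  set w := q^(-(mz q z)) * z with hw
  have hwA : w ∈ A := ⟨h1.le, h2⟩
  have e1 : Hhat q z = (-1:ℂ)^(mz q z) * Kf q w := by rw [Hhat]
  have e2 : Kf q w = Hhat q w := (Hhat_ann hq hq0 h1 h2).symm
  rw [e1, e2, norm_mul]
  have e3 : ‖((-1:ℂ))^(mz q z)‖ = 1 := by
    rw [norm_zpow, norm_neg, norm_one, one_zpow]
  rw [e3, one_mul]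
  exact hx₀max hwA

lemma K_zero (hq : ‖q‖ < 1) (hq0 : q ≠ 0) {s : ℂ} (hs : goodPt q s) : Kf q s = 0 := by
  obtain ⟨M, hM⟩ := Hhat_bound hq hq0
  set HH := Function.update (Hhat q) 0 (limUnder (nhdsWithin (0:ℂ) {(0:ℂ)}ᶜ) (Hhat q)) with hHH
  have hd : DifferentiableOn ℂ (Hhat q) (Set.univ \ {0}) := by
    intro z hz
    exact (Hhat_diffAt hq hq0 (by simpa using hz.2)).differentiableWithinAt
  have hb : BddAbove ((norm ∘ Hhat q) '' (Set.univ \ {0})) := by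
    refine ⟨M, ?_⟩
    rintro y ⟨z, hz, rfl⟩
    exact hM z (by simpa using hz.2)
  have hHHdiff : Differentiable ℂ HH := by
    rw [← differentiableOn_univ]
    exact Complex.differentiableOn_update_limUnder_of_bddAbove (Filter.univ_mem) hd hb
  have hbdd : ∀ z : ℂ, ‖HH z‖ ≤ M := by
    intro z
    by_cases hz : z = 0
    · subst hz
      have hcont : ContinuousAt HH 0 := hHHdiff.continuous.continuousAt
      have htend : Tendsto (fun w => ‖HH w‖) (nhdsWithin (0:ℂ) {(0:ℂ)}ᶜ) (nhds ‖HH 0‖) :=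
        (hcont.norm.tendsto).mono_left nhdsWithin_le_nhds
      apply le_of_tendsto htend
      filter_upwards [self_mem_nhdsWithin] with w hw
      rw [hHH, Function.update_of_ne hw]
      exact hM w hw
    · rw [hHH, Function.update_of_ne hz]
      exact hM z hz
  have hrange : Bornology.IsBounded (Set.range HH) := by
    rw [isBounded_iff_forall_norm_le]
    exact ⟨M, by rintro x ⟨z, rfl⟩; exact hbdd z⟩
  have hconst := hHHdiff.apply_eq_apply_of_bounded hrange s (-1)
  have e1 : HH s = Kf q s := by
    rw [hHH, Function.update_of_ne hs.1, Hhat_eq_K hq hq0 hs]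
  have e2 : HH (-1) = Kf q (-1) := by
    rw [hHH, Function.update_of_ne (by norm_num : (-1:ℂ) ≠ 0)]
    exact Hhat_ann hq hq0 (by norm_num; exact hq) (by norm_num)
  rw [e1, e2, K_neg_one] at hconst
  exact hconst

end Ferm

namespace Ferm
variable {q : ℂ}

lemma qpoch_zero_arg : qpoch 0 q = 1 := by
  rw [qpoch]
  simp

lemma qpoch_at_zero (a : ℂ) : qpoch a 0 = 1 - a := by
  rw [qpoch_split (q := (0:ℂ)) (by norm_num) a 1]
  simp [qpoch_zero_arg]

lemma mk_goodPt (hq0 : q ≠ 0) {t : ℂ} (ht : t ≠ 0) (ht1 : t ≠ 1)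
    (h1 : ∀ r : ℕ, 1 - q ^ (r + 1) * t ≠ 0)
    (h2 : ∀ r : ℕ, 1 - q ^ (r + 1) * t⁻¹ ≠ 0) : goodPt q t := by
  refine ⟨ht, fun k hk => ?_⟩
  rcases lt_trichotomy k 0 with hlt | h0 | hgt
  · set n := (-k).toNat with hn
    have hn1 : 1 ≤ n := by omega
    have hnk : (n:ℤ) = -k := Int.toNat_of_nonneg (by omega)
    refine h1 (n-1) ?_
    have e1 : (n-1)+1 = n := by omega
    rw [e1, hk, ← zpow_natCast q n, hnk, ← zpow_add₀ hq0]
    rw [show -k + k = 0 by ring, zpow_zero, sub_self]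
  · rw [h0, zpow_zero] at hk
    exact ht1 hk
  · set n := k.toNat with hn
    have hn1 : 1 ≤ n := by omega
    have hnk : (n:ℤ) = k := Int.toNat_of_nonneg (by omega)
    refine h2 (n-1) ?_
    have e1 : (n-1)+1 = n := by omega
    rw [e1, hk, ← zpow_natCast q n, hnk, ← zpow_neg, ← zpow_add₀ hq0]
    rw [show k + -k = 0 by ring, zpow_zero, sub_self]

end Ferm

/-- the fermionic-type `q`-identity
`(-qt;q)_∞ (-t^{-1};q)_∞ (q;q)_∞² / ((qt;q)_∞ (t^{-1};q)_∞ (-q;q)_∞²)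
 = (t+1)/(t-1) + 2 ∑_{r≥0} (-1)^r [ q^{r+1}t/(1-q^{r+1}t)
     - q^{r+1}t^{-1}/(1-q^{r+1}t^{-1}) ]`,
for `|q| < 1` and `t` off the singular set. -/
theorem fermionic_q_identity (q t : ℂ) (hq : ‖q‖ < 1) (ht : t ≠ 0) (ht1 : t ≠ 1)
    (h1 : ∀ r : ℕ, 1 - q ^ (r + 1) * t ≠ 0)
    (h2 : ∀ r : ℕ, 1 - q ^ (r + 1) * t⁻¹ ≠ 0) (h3 : qpoch t⁻¹ q ≠ 0) :
    qpoch (-(q * t)) q * qpoch (-t⁻¹) q * (qpoch q q) ^ 2 /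
      (qpoch (q * t) q * qpoch t⁻¹ q * (qpoch (-q) q) ^ 2)
    = (t + 1) / (t - 1) +
        2 * ∑' r : ℕ,
          ((-1 : ℂ) ^ r * q ^ (r + 1) * t / (1 - q ^ (r + 1) * t)
            - (-1 : ℂ) ^ r * q ^ (r + 1) * t⁻¹ / (1 - q ^ (r + 1) * t⁻¹)) := by
  have ht1' : t - 1 ≠ 0 := sub_ne_zero.2 ht1
  have h1si : 1 - t⁻¹ ≠ 0 := Ferm.one_sub_inv_ne ht ht1
  by_cases hq0 : q = 0
  · subst hq0
    have hterm : ∀ r : ℕ, ((-1:ℂ)^r * (0:ℂ)^(r+1) * t / (1 - (0:ℂ)^(r+1)*t)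
        - (-1:ℂ)^r * (0:ℂ)^(r+1) * t⁻¹ / (1 - (0:ℂ)^(r+1)*t⁻¹)) = 0 := by
      intro r
      rw [zero_pow (by omega : r+1 ≠ 0)]
      simp
    rw [tsum_congr hterm, tsum_zero, mul_zero, add_zero]
    simp only [Ferm.qpoch_at_zero]
    rw [div_eq_div_iff]
    · field_simp
      ring
    · simp only [zero_mul, mul_zero, neg_zero, sub_zero, sub_neg_eq_add, add_zero]
      intro hh
      rcases mul_eq_zero.1 hh with h' | h'
      · rcases mul_eq_zero.1 h' with h'' | h''
        · norm_num at h''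
        · exact h1si h''
      · norm_num at h'
    · exact ht1'
  · have hgood : Ferm.goodPt q t := Ferm.mk_goodPt hq0 ht ht1 h1 h2
    have hK := Ferm.K_zero hq hq0 hgood
    rw [Ferm.K_eq hq ht1] at hK
    have hFG : Ferm.Ffun q t = Ferm.Gfun q t := by linear_combination hK
    have R3' : qpoch (-t⁻¹) q = (1+t⁻¹) * qpoch (-(q*t⁻¹)) q := by
      rw [Ferm.qpoch_peel hq (-t⁻¹)]
      rw [Ferm.qpoch_arg_congr (-t⁻¹*q) (-(q*t⁻¹)) (by ring)]
      ring_nf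
    have R4' : qpoch t⁻¹ q = (1-t⁻¹) * qpoch (q*t⁻¹) q := by
      rw [Ferm.qpoch_peel hq t⁻¹]
      rw [Ferm.qpoch_arg_congr (t⁻¹*q) (q*t⁻¹) (by ring)]
    have hA : qpoch (q*t) q ≠ 0 := Ferm.qpoch_qt_ne_zero hq hq0 h1
    have hB : qpoch (q*t⁻¹) q ≠ 0 := Ferm.qpoch_qtinv_ne_zero hq hq0 h2
    have hc : qpoch (-q) q ≠ 0 := Ferm.qpoch_negq_ne_zero hq
    have hLHS : qpoch (-(q * t)) q * qpoch (-t⁻¹) q * (qpoch q q) ^ 2 /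
        (qpoch (q * t) q * qpoch t⁻¹ q * (qpoch (-q) q) ^ 2) = Ferm.Ffun q t := by
      rw [R3', R4', Ferm.Ffun, Ferm.Phi, div_mul_div_comm]
      rw [div_eq_div_iff]
      · field_simp
      · exact mul_ne_zero (mul_ne_zero hA (mul_ne_zero h1si hB)) (pow_ne_zero 2 hc)
      · exact mul_ne_zero ht1' (mul_ne_zero (mul_ne_zero hA hB) (pow_ne_zero 2 hc))
    rw [hLHS, hFG]
    rfl
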